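/- Let F(x) = sign(x)·√|x| and for a > 0 define f_a(x) = √(x + a) for x > 0 and f_a(x) = 2√a - √(a - x) for x ≤ 0. Then f is a smoothing function of F (i.e., each f_a is C¹ on ℝ and f_a(y) → F(x) as (y,a) → (x,0)), and f_a'(x) → +∞ as (x, a) → (0, 0); consequently D_F(0) := {v ∈ ℝ : ∃ x_n → 0, a_n → 0, a_n > 0, f_{a_n}'(x_n) → v} is empty. -/

import Mathlib

open Filter Topology

/-- The non Lipschitz function `F(x) = sign(x)·√|x|`. -/
noncomputable def signSqrt (x : ℝ) : ℝ := Real.sign x * Real.sqrt |x|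

/-- A smoothing of `signSqrt`: `f_a(x) = √(x + a)` for `x > 0`, `2√a - √(a - x)` otherwise. -/
noncomputable def signSqrtSmoothing (a x : ℝ) : ℝ :=
  if 0 < x then Real.sqrt (x + a) else 2 * Real.sqrt a - Real.sqrt (a - x)

lemma smoothing_nonpos {a x : ℝ} (hx : x ≤ 0) :
    signSqrtSmoothing a x = 2 * Real.sqrt a - Real.sqrt (a - x) := by
  simp [signSqrtSmoothing, if_neg (not_lt.2 hx)]

lemma smoothing_pos {a x : ℝ} (hx : 0 < x) :
    signSqrtSmoothing a x = Real.sqrt (x + a) := by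
  simp [signSqrtSmoothing, if_pos hx]

lemma smoothing_nonneg {a x : ℝ} (hx : 0 ≤ x) :
    signSqrtSmoothing a x = Real.sqrt (x + a) := by
  rcases eq_or_lt_of_le hx with h | h
  · rw [smoothing_nonpos (le_of_eq h.symm), ← h]
    rw [sub_zero, zero_add]; ring
  · exact smoothing_pos h

lemma sqrt_add_hasDerivAt {a y : ℝ} (h : -a < y) :
    HasDerivAt (fun z => Real.sqrt (z + a)) (1 / (2 * Real.sqrt (y + a))) y := by
  have h1 : HasDerivAt (fun z : ℝ => z + a) 1 y := (hasDerivAt_id y).add_const a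
  have h2 : HasDerivAt Real.sqrt (1 / (2 * Real.sqrt (y + a))) (y + a) :=
    Real.hasDerivAt_sqrt (by linarith)
  simpa [Function.comp_def] using h2.comp y h1

lemma two_sub_hasDerivAt {a y : ℝ} (h : y < a) :
    HasDerivAt (fun z => 2 * Real.sqrt a - Real.sqrt (a - z))
      (1 / (2 * Real.sqrt (a - y))) y := by
  have h1 : HasDerivAt (fun z : ℝ => a - z) (-1) y := by
    simpa using (hasDerivAt_id y).const_sub a
  have h2 : HasDerivAt Real.sqrt (1 / (2 * Real.sqrt (a - y))) (a - y) :=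
    Real.hasDerivAt_sqrt (by linarith)
  have h3 := (h2.comp y h1).const_sub (2 * Real.sqrt a)
  simpa [mul_comm] using h3

lemma key_hasDerivAt {a : ℝ} (ha : 0 < a) (x : ℝ) :
    HasDerivAt (signSqrtSmoothing a) (1 / (2 * Real.sqrt (a + |x|))) x := by
  rcases lt_trichotomy x 0 with hx | hx | hx
  · have h := two_sub_hasDerivAt (a := a) (y := x) (by linarith)
    have he : signSqrtSmoothing a =ᶠ[𝓝 x] fun z => 2 * Real.sqrt a - Real.sqrt (a - z) := by
      filter_upwards [Iio_mem_nhds hx] with y hy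
      exact smoothing_nonpos (le_of_lt hy)
    rw [abs_of_neg hx, show a + -x = a - x by ring]
    exact h.congr_of_eventuallyEq he
  · subst hx
    have hIci : HasDerivWithinAt (signSqrtSmoothing a) (1 / (2 * Real.sqrt (0 + a)))
        (Set.Ici 0) 0 :=
      ((sqrt_add_hasDerivAt (a := a) (y := 0) (by linarith)).hasDerivWithinAt).congr
        (fun y hy => smoothing_nonneg hy) (smoothing_nonneg le_rfl)
    have hIic : HasDerivWithinAt (signSqrtSmoothing a) (1 / (2 * Real.sqrt (a - 0)))
        (Set.Iic 0) 0 :=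
      ((two_sub_hasDerivAt (a := a) (y := 0) (by linarith)).hasDerivWithinAt).congr
        (fun y hy => smoothing_nonpos hy) (smoothing_nonpos le_rfl)
    rw [zero_add] at hIci
    rw [sub_zero] at hIic
    have h := hIic.union hIci
    rw [Set.Iic_union_Ici] at h
    rw [hasDerivWithinAt_univ] at h
    simpa using h
  · have h := sqrt_add_hasDerivAt (a := a) (y := x) (by linarith)
    have he : signSqrtSmoothing a =ᶠ[𝓝 x] fun z => Real.sqrt (z + a) := by
      filter_upwards [Ioi_mem_nhds hx] with y hy
      exact smoothing_pos hy
    rw [abs_of_pos hx, add_comm]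
    exact h.congr_of_eventuallyEq he

lemma key_deriv {a : ℝ} (ha : 0 < a) (x : ℝ) :
    deriv (signSqrtSmoothing a) x = 1 / (2 * Real.sqrt (a + |x|)) :=
  (key_hasDerivAt ha x).deriv

lemma smoothing_eq_G (a x : ℝ) :
    signSqrtSmoothing a x =
      Real.sqrt (max x 0 + a) + Real.sqrt a - Real.sqrt (a + max (-x) 0) := by
  rcases le_or_gt x 0 with hx | hx
  · rw [smoothing_nonpos hx, max_eq_right hx, max_eq_left (by linarith), zero_add,
      show a + -x = a - x by ring]
    ring
  · rw [smoothing_pos hx, max_eq_left hx.le, max_eq_right (by linarith), add_zero]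
    ring

lemma part1 : ∀ a : ℝ, 0 < a → ContDiff ℝ 1 (signSqrtSmoothing a) := by
  intro a ha
  rw [contDiff_one_iff_deriv]
  refine ⟨fun x => (key_hasDerivAt ha x).differentiableAt, ?_⟩
  have h : deriv (signSqrtSmoothing a) = fun x => 1 / (2 * Real.sqrt (a + |x|)) :=
    funext (key_deriv ha)
  rw [h]
  refine continuous_const.div (by fun_prop) fun x => ?_
  exact ne_of_gt (mul_pos two_pos (Real.sqrt_pos.2 (by positivity)))

lemma part2 : ∀ x : ℝ, Tendsto (fun p : ℝ × ℝ => signSqrtSmoothing p.2 p.1)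
    ((𝓝 x) ×ˢ (𝓝[>] (0 : ℝ))) (𝓝 (signSqrt x)) := by
  intro x
  have hG : Continuous fun p : ℝ × ℝ =>
      Real.sqrt (max p.1 0 + p.2) + Real.sqrt p.2 - Real.sqrt (p.2 + max (-p.1) 0) := by
    fun_prop
  have hle : (𝓝 x) ×ˢ (𝓝[>] (0 : ℝ)) ≤ 𝓝 ((x, 0) : ℝ × ℝ) := by
    rw [nhds_prod_eq]
    exact Filter.prod_mono le_rfl nhdsWithin_le_nhds
  have ht := (hG.tendsto (x, 0)).mono_left hle
  have hval : Real.sqrt (max x 0 + 0) + Real.sqrt 0 - Real.sqrt (0 + max (-x) 0)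
      = signSqrt x := by
    rcases lt_trichotomy x 0 with hx | hx | hx
    · rw [max_eq_right hx.le, max_eq_left (by linarith)]
      simp [signSqrt, Real.sign_of_neg hx, abs_of_neg hx]
    · subst hx; simp [signSqrt]
    · rw [max_eq_left hx.le, max_eq_right (by linarith)]
      simp [signSqrt, Real.sign_of_pos hx, abs_of_pos hx]
  rw [hval] at ht
  refine ht.congr fun p => ?_
  exact (smoothing_eq_G p.2 p.1).symm

lemma part3 : Tendsto (fun p : ℝ × ℝ => deriv (signSqrtSmoothing p.2) p.1)
    ((𝓝 (0 : ℝ)) ×ˢ (𝓝[>] (0 : ℝ))) atTop := by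
  set l := (𝓝 (0 : ℝ)) ×ˢ (𝓝[>] (0 : ℝ)) with hl
  have hev : ∀ᶠ p : ℝ × ℝ in l, 0 < p.2 :=
    Filter.Eventually.prod_inr self_mem_nhdsWithin _
  have h0 : Tendsto (fun p : ℝ × ℝ => 2 * Real.sqrt (p.2 + |p.1|)) l (𝓝[>] (0 : ℝ)) := by
    rw [tendsto_nhdsWithin_iff]
    constructor
    · have hc : Continuous fun p : ℝ × ℝ => 2 * Real.sqrt (p.2 + |p.1|) := by fun_prop
      have hle : l ≤ 𝓝 ((0, 0) : ℝ × ℝ) := by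
        rw [hl, nhds_prod_eq]
        exact Filter.prod_mono le_rfl nhdsWithin_le_nhds
      have := (hc.tendsto (0, 0)).mono_left hle
      simpa using this
    · exact hev.mono fun p hp =>
        Set.mem_Ioi.2 (mul_pos two_pos (Real.sqrt_pos.2 (by positivity)))
  have hinv := h0.inv_tendsto_nhdsGT_zero
  refine hinv.congr' ?_
  filter_upwards [hev] with p hp
  rw [key_deriv hp, Pi.inv_apply, one_div]

lemma part4 : {v : ℝ | ∃ xs as : ℕ → ℝ, Tendsto xs atTop (𝓝 0) ∧ Tendsto as atTop (𝓝 0) ∧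
    (∀ n, 0 < as n) ∧
    Tendsto (fun n => deriv (signSqrtSmoothing (as n)) (xs n)) atTop (𝓝 v)} = ∅ := by
  ext v
  simp only [Set.mem_setOf_eq, Set.mem_empty_iff_false, iff_false, not_exists]
  rintro xs as ⟨hxs, has, hpos, hv⟩
  have hps : Tendsto (fun n => ((xs n, as n) : ℝ × ℝ)) atTop
      ((𝓝 (0 : ℝ)) ×ˢ (𝓝[>] (0 : ℝ))) :=
    Tendsto.prodMk hxs (tendsto_nhdsWithin_iff.mpr ⟨has, Eventually.of_forall hpos⟩)
  exact not_tendsto_nhds_of_tendsto_atTop (part3.comp hps) v hv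

theorem signSqrt_smoothing_empty_DF :
    (∀ a : ℝ, 0 < a → ContDiff ℝ 1 (signSqrtSmoothing a)) ∧
    (∀ x : ℝ, Tendsto (fun p : ℝ × ℝ => signSqrtSmoothing p.2 p.1)
        ((𝓝 x) ×ˢ (𝓝[>] (0 : ℝ))) (𝓝 (signSqrt x))) ∧
    Tendsto (fun p : ℝ × ℝ => deriv (signSqrtSmoothing p.2) p.1)
        ((𝓝 (0 : ℝ)) ×ˢ (𝓝[>] (0 : ℝ))) atTop ∧
    {v : ℝ | ∃ xs as : ℕ → ℝ, Tendsto xs atTop (𝓝 0) ∧ Tendsto as atTop (𝓝 0) ∧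
      (∀ n, 0 < as n) ∧
      Tendsto (fun n => deriv (signSqrtSmoothing (as n)) (xs n)) atTop (𝓝 v)} = ∅ := by
  exact ⟨part1, part2, part3, part4⟩
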